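/- (Second Geometric Lemma, Lemma 3.2) There exist a finite set Λ_v contained in S² ∩ ℚ³ (unit vectors in ℝ³ with rational coordinates), for each ξ ∈ Λ_v vectors ξ₁, ξ₂ ∈ ℝ³ such that (ξ, ξ₁, ξ₂) is an orthonormal basis of ℝ³, a constant ε_v > 0, and for each ξ ∈ Λ_v a function γ_ξ that is smooth and strictly positive on the set of 3×3 symmetric real matrices A with |A − Id| < ε_v, such that every 3×3 symmetric real matrix A with |A − Id| < ε_v satisfies A = Σ_{ξ ∈ Λ_v} (γ_ξ(A))² (ξ ⊗ ξ). -/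

import Mathlib

open scoped Matrix

attribute [local instance] Matrix.frobeniusNormedAddCommGroup Matrix.frobeniusNormedSpace

def outer (u w : Fin 3 → ℝ) : Matrix (Fin 3) (Fin 3) ℝ := fun i j => u i * w j

def IsRationalVec (u : Fin 3 → ℝ) : Prop := ∀ i, ∃ q : ℚ, u i = (q : ℝ)

def dot3 (u v : Fin 3 → ℝ) : ℝ := ∑ i, u i * v i

def OrthonormalTriple (u v w : Fin 3 → ℝ) : Prop :=
  dot3 u u = 1 ∧ dot3 v v = 1 ∧ dot3 w w = 1 ∧
  dot3 u v = 0 ∧ dot3 u w = 0 ∧ dot3 v w = 0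

namespace SGL

def n : Fin 9 → Fin 3 → ℤ
  | 0 => ![5,0,0] | 1 => ![0,5,0] | 2 => ![0,0,5]
  | 3 => ![3,4,0] | 4 => ![3,-4,0]
  | 5 => ![3,0,4] | 6 => ![3,0,-4]
  | 7 => ![0,3,4] | 8 => ![0,3,-4]

def n1 : Fin 9 → Fin 3 → ℤ
  | 0 => ![0,5,0] | 1 => ![0,0,5] | 2 => ![5,0,0]
  | 3 => ![-4,3,0] | 4 => ![4,3,0]
  | 5 => ![-4,0,3] | 6 => ![4,0,3]
  | 7 => ![0,-4,3] | 8 => ![0,4,3]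

def n2 : Fin 9 → Fin 3 → ℤ
  | 0 => ![0,0,5] | 1 => ![5,0,0] | 2 => ![0,5,0]
  | 3 => ![0,0,5] | 4 => ![0,0,5]
  | 5 => ![0,5,0] | 6 => ![0,5,0]
  | 7 => ![5,0,0] | 8 => ![5,0,0]

lemma n_inj : Function.Injective n := by decide

noncomputable def f (k : Fin 9) : Fin 3 → ℝ := fun j => (n k j : ℝ)/5
noncomputable def f1 (k : Fin 9) : Fin 3 → ℝ := fun j => (n1 k j : ℝ)/5
noncomputable def f2 (k : Fin 9) : Fin 3 → ℝ := fun j => (n2 k j : ℝ)/5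

lemma f_inj : Function.Injective f := by
  intro a b h
  apply n_inj
  funext j
  have h2 := congrFun h j
  simp only [f] at h2
  have h3 : (n a j : ℝ) = n b j := by linarith
  exact_mod_cast h3

/-- coefficient functions -/
noncomputable def c : Fin 9 → Matrix (Fin 3) (Fin 3) ℝ → ℝ
  | 0 => fun A => A 0 0 - 9/50
  | 1 => fun A => A 1 1 - 1/4
  | 2 => fun A => A 2 2 - 8/25
  | 3 => fun A => 1/8 + 25/24 * A 0 1
  | 4 => fun A => 1/8 - 25/24 * A 0 1
  | 5 => fun A => 1/8 + 25/24 * A 0 2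
  | 6 => fun A => 1/8 - 25/24 * A 0 2
  | 7 => fun A => 1/8 + 25/24 * A 1 2
  | 8 => fun A => 1/8 - 25/24 * A 1 2

lemma entry_le (M : Matrix (Fin 3) (Fin 3) ℝ) (i j : Fin 3) : |M i j| ≤ ‖M‖ := by
  rw [Matrix.frobenius_norm_def]
  have h1 : |M i j| = (‖M i j‖ ^ (2:ℝ)) ^ (1/2 : ℝ) := by
    rw [← Real.rpow_mul (norm_nonneg _)]
    norm_num [Real.norm_eq_abs]
  rw [h1]
  apply Real.rpow_le_rpow (by positivity) _ (by norm_num)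
  calc ‖M i j‖ ^ (2:ℝ) ≤ ∑ j', ‖M i j'‖ ^ (2:ℝ) :=
        Finset.single_le_sum (f := fun j' => ‖M i j'‖ ^ (2:ℝ))
          (fun k _ => by positivity) (Finset.mem_univ j)
    _ ≤ ∑ i', ∑ j', ‖M i' j'‖ ^ (2:ℝ) :=
        Finset.single_le_sum (f := fun i' => ∑ j', ‖M i' j'‖ ^ (2:ℝ))
          (fun k _ => by positivity) (Finset.mem_univ i)

lemma entry_bound {A : Matrix (Fin 3) (Fin 3) ℝ} (h : ‖A - 1‖ < 1/10) (i j : Fin 3) :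
    -(1/10) < A i j - (1 : Matrix (Fin 3) (Fin 3) ℝ) i j ∧
      A i j - (1 : Matrix (Fin 3) (Fin 3) ℝ) i j < 1/10 := by
  have h1 := (entry_le (A - 1) i j).trans_lt h
  rwa [Matrix.sub_apply, abs_lt] at h1

lemma c_pos {A : Matrix (Fin 3) (Fin 3) ℝ} (h : ‖A - 1‖ < 1/10) (k : Fin 9) :
    0 < c k A := by
  have h00 := entry_bound h 0 0
  have h11 := entry_bound h 1 1
  have h22 := entry_bound h 2 2
  have h01 := entry_bound h 0 1
  have h02 := entry_bound h 0 2
  have h12 := entry_bound h 1 2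
  rw [Matrix.one_apply_eq] at h00 h11 h22
  rw [Matrix.one_apply_ne (by decide), sub_zero] at h01 h02 h12
  fin_cases k <;> simp only [c] <;> linarith [h00.1, h00.2, h11.1, h11.2,
      h22.1, h22.2, h01.1, h01.2, h02.1, h02.2, h12.1, h12.2]

lemma entry_contDiff (i j : Fin 3) :
    ContDiff ℝ (⊤ : ℕ∞) (fun A : Matrix (Fin 3) (Fin 3) ℝ => A i j) := by
  apply IsBoundedLinearMap.contDiff
  refine ⟨⟨fun A B => rfl, fun r A => rfl⟩, 1, one_pos, fun A => ?_⟩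
  simpa [Real.norm_eq_abs] using entry_le A i j

lemma c_contDiff (k : Fin 9) : ContDiff ℝ (⊤ : ℕ∞) (c k) := by
  fin_cases k <;> simp only [c] <;>
  first
  | exact (entry_contDiff _ _).sub contDiff_const
  | exact contDiff_const.add (contDiff_const.mul (entry_contDiff _ _))
  | exact contDiff_const.sub (contDiff_const.mul (entry_contDiff _ _))

lemma sum_univ_nine {M : Type*} [AddCommMonoid M] (g : Fin 9 → M) :
    ∑ i, g i = g 0 + g 1 + g 2 + g 3 + g 4 + g 5 + g 6 + g 7 + g 8 := by
  rw [Fin.sum_univ_castSucc, Fin.sum_univ_eight]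
  rfl

end SGL

theorem second_geometric_lemma :
    ∃ (Λv : Finset (Fin 3 → ℝ)) (e₁ e₂ : (Fin 3 → ℝ) → (Fin 3 → ℝ)) (εv : ℝ)
      (γ : (Fin 3 → ℝ) → Matrix (Fin 3) (Fin 3) ℝ → ℝ),
      0 < εv ∧
      (∀ ξ ∈ Λv, IsRationalVec ξ ∧ OrthonormalTriple ξ (e₁ ξ) (e₂ ξ)) ∧
      (∀ ξ ∈ Λv,
        ContDiffOn ℝ (⊤ : ℕ∞) (γ ξ)
          {A : Matrix (Fin 3) (Fin 3) ℝ | Aᵀ = A ∧ ‖A - 1‖ < εv} ∧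
        ∀ A : Matrix (Fin 3) (Fin 3) ℝ, Aᵀ = A → ‖A - 1‖ < εv → 0 < γ ξ A) ∧
      ∀ A : Matrix (Fin 3) (Fin 3) ℝ, Aᵀ = A → ‖A - 1‖ < εv →
        A = ∑ ξ ∈ Λv, (γ ξ A) ^ 2 • outer ξ ξ := by
  classical
  refine ⟨Finset.univ.image SGL.f, fun ξ => SGL.f1 (Function.invFun SGL.f ξ),
    fun ξ => SGL.f2 (Function.invFun SGL.f ξ), 1/10,
    fun ξ A => Real.sqrt (SGL.c (Function.invFun SGL.f ξ) A), by norm_num, ?_, ?_, ?_⟩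
  · intro ξ hξ
    obtain ⟨k, _, rfl⟩ := Finset.mem_image.mp hξ
    have hk : Function.invFun SGL.f (SGL.f k) = k :=
      Function.leftInverse_invFun SGL.f_inj k
    simp only [hk]
    constructor
    · intro j; exact ⟨(SGL.n k j : ℚ)/5, by simp [SGL.f]⟩
    · fin_cases k <;>
        simp [OrthonormalTriple, dot3, SGL.f, SGL.f1, SGL.f2, SGL.n, SGL.n1, SGL.n2,
          Fin.sum_univ_three] <;> norm_num
  · intro ξ hξ
    obtain ⟨k, _, rfl⟩ := Finset.mem_image.mp hξ
    have hk : Function.invFun SGL.f (SGL.f k) = k :=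
      Function.leftInverse_invFun SGL.f_inj k
    simp only [hk]
    constructor
    · intro A hA
      exact ((Real.contDiffAt_sqrt (ne_of_gt (SGL.c_pos hA.2 k))).comp A
        (SGL.c_contDiff k).contDiffAt).contDiffWithinAt
    · intro A _ hA
      exact Real.sqrt_pos.mpr (SGL.c_pos hA k)
  · intro A hsymm hA
    rw [Finset.sum_image (fun x _ y _ h => SGL.f_inj h)]
    have hk : ∀ k : Fin 9, Function.invFun SGL.f (SGL.f k) = k :=
      Function.leftInverse_invFun SGL.f_inj
    have hsq : ∀ k : Fin 9,
        Real.sqrt (SGL.c (Function.invFun SGL.f (SGL.f k)) A) ^ 2 = SGL.c k A := by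
      intro k
      rw [hk k, Real.sq_sqrt (SGL.c_pos hA k).le]
    simp only [hsq]
    have h10 : A 1 0 = A 0 1 := congrFun (congrFun hsymm 0) 1
    have h20 : A 2 0 = A 0 2 := congrFun (congrFun hsymm 0) 2
    have h21 : A 2 1 = A 1 2 := congrFun (congrFun hsymm 1) 2
    funext i j
    rw [show ((∑ k : Fin 9, SGL.c k A • outer (SGL.f k) (SGL.f k)) i j)
        = ∑ k : Fin 9, SGL.c k A * (SGL.f k i * SGL.f k j) by
      rw [Matrix.sum_apply]
      simp [outer]]
    rw [SGL.sum_univ_nine]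
    fin_cases i <;> fin_cases j <;>
      simp [SGL.c, SGL.f, SGL.n, h10, h20, h21] <;> push_cast <;> ring
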